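/- Let α be a positive transcendental real number. Then there exists an additive subgroup G of ℝ² which contains (1,1), is dense in ℝ², and satisfies I(G) = { [[α^{2n},0],[0,α^{2n}]] : n ∈ ℤ }. -/

import Mathlib

open Polynomial

/-- The subring `ℤ[α², α⁻²]` of `ℝ`, as an additive subgroup. -/
def RG (α : ℝ) : AddSubgroup ℝ where
  carrier := {x | ∃ (f : Polynomial ℤ) (N : ℕ), x * (α ^ 2) ^ N = Polynomial.aeval (α ^ 2) f}
  zero_mem' := ⟨0, 0, by simp⟩
  add_mem' := by
    rintro x y ⟨f, M, hf⟩ ⟨g, N, hg⟩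
    refine ⟨f * X ^ N + g * X ^ M, M + N, ?_⟩
    have : (x + y) * (α ^ 2) ^ (M + N)
        = x * (α ^ 2) ^ M * (α ^ 2) ^ N + y * (α ^ 2) ^ N * (α ^ 2) ^ M := by
      rw [pow_add]; ring
    rw [this, hf, hg]
    simp [mul_comm]
  neg_mem' := by
    rintro x ⟨f, M, hf⟩
    exact ⟨-f, M, by rw [neg_mul, hf]; simp⟩

lemma mem_RG {α x : ℝ} :
    x ∈ RG α ↔ ∃ (f : Polynomial ℤ) (N : ℕ), x * (α ^ 2) ^ N = Polynomial.aeval (α ^ 2) f :=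
  Iff.rfl

lemma one_mem_RG (α : ℝ) : (1 : ℝ) ∈ RG α := ⟨1, 0, by simp⟩

lemma sq_mem_RG (α : ℝ) : (α ^ 2) ∈ RG α := ⟨X, 0, by simp⟩

/-- The countable "exceptional set" of real numbers that are rational functions of `α`. -/
def Eset (α : ℝ) : Set ℝ :=
  {x | ∃ f g : Polynomial ℤ, Polynomial.aeval α g ≠ 0 ∧
    x * Polynomial.aeval α g = Polynomial.aeval α f}

noncomputable def polyIntEquiv : Polynomial ℤ ≃ (ℕ →₀ ℤ) :=
  ⟨fun p => p.toFinsupp.coeff, fun f => Polynomial.ofFinsupp (AddMonoidAlgebra.ofCoeff f),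
    fun p => by cases p; rfl, fun p => rfl⟩

instance : Countable (Polynomial ℤ) := Countable.of_equiv _ polyIntEquiv.symm

lemma countable_Eset (α : ℝ) : (Eset α).Countable := by
  have : Eset α ⊆ Set.range (fun p : Polynomial ℤ × Polynomial ℤ =>
      Polynomial.aeval α p.1 / Polynomial.aeval α p.2) := by
    rintro x ⟨f, g, hg, hx⟩
    exact ⟨(f, g), by field_simp [hx]; rw [← hx]; ring⟩
  exact (Set.countable_range _).mono this

lemma exists_beta (α : ℝ) : ∃ β : ℝ, β ∉ Eset α := by
  by_contra h
  push_neg at h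
  exact Cardinal.not_countable_real ((countable_Eset α).mono fun x _ => h x)

lemma zero_mem_Eset (α : ℝ) : (0 : ℝ) ∈ Eset α := ⟨0, 1, by simp, by simp⟩

section main

variable {α : ℝ} (hα : 0 < α) (htr : Transcendental ℚ α)

/-- Transcendence transfer: integer polynomials vanishing at `α²` are zero. -/
lemma htr2 (htr : Transcendental ℚ α) (f : Polynomial ℤ)
    (hf : Polynomial.aeval (α ^ 2) f = 0) : f = 0 := by
  set g : Polynomial ℚ := f.map (Int.castRingHom ℚ) with hg
  have hg0 : Polynomial.aeval α (g.comp (X ^ 2)) = 0 := by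
    rw [aeval_comp]
    have h1 : Polynomial.aeval α ((X : Polynomial ℚ) ^ 2) = α ^ 2 := by simp
    rw [h1, hg, show (Int.castRingHom ℚ) = algebraMap ℤ ℚ from rfl,
      Polynomial.aeval_map_algebraMap, hf]
  have hcomp : g.comp (X ^ 2) = 0 := by
    by_contra hne
    exact htr ⟨g.comp (X ^ 2), hne, hg0⟩
  have hgz : g = 0 := by
    rcases Polynomial.comp_eq_zero_iff.mp hcomp with h | ⟨_, h⟩
    · exact h
    · exfalso
      have : ((X : Polynomial ℚ) ^ 2).coeff 0 = 0 := by simp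
      rw [this] at h
      simpa using congrArg (fun p => Polynomial.coeff p 2) h
  exact Polynomial.map_injective _ Int.cast_injective (by simpa using hgz)

/-- Transcendence transfer, equation form. -/
lemma htr2' (htr : Transcendental ℚ α) (f g : Polynomial ℤ)
    (h : Polynomial.aeval (α ^ 2) f = Polynomial.aeval (α ^ 2) g) : f = g := by
  exact sub_eq_zero.mp (htr2 htr (f - g) (by simp [h]))

include hα

lemma sqpos : (0:ℝ) < α ^ 2 := by positivity

lemma sqne : (α:ℝ) ^ 2 ≠ 0 := by positivity

/-- `(α²)^n · x ∈ R` for all `n : ℤ`, `x ∈ R`. -/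
lemma RG_zpow_mul_mem {x : ℝ} (hx : x ∈ RG α) (n : ℤ) : (α ^ 2) ^ n * x ∈ RG α := by
  obtain ⟨f, N, hf⟩ := hx
  have hA : (α:ℝ) ^ 2 ≠ 0 := by positivity
  rcases le_or_gt 0 n with h | h
  · obtain ⟨m, rfl⟩ := Int.eq_ofNat_of_zero_le h
    refine ⟨X ^ m * f, N, ?_⟩
    rw [zpow_natCast]
    calc (α ^ 2) ^ m * x * ((α ^ 2) ^ N)
        = (α ^ 2) ^ m * (x * (α ^ 2) ^ N) := by ring
      _ = (α ^ 2) ^ m * Polynomial.aeval (α ^ 2) f := by rw [hf]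
      _ = Polynomial.aeval (α ^ 2) (X ^ m * f) := by simp
  · obtain ⟨m, rfl⟩ : ∃ m : ℕ, n = -(m : ℤ) := ⟨n.natAbs, by omega⟩
    refine ⟨f, N + m, ?_⟩
    rw [zpow_neg, zpow_natCast, pow_add]
    field_simp
    rw [← hf]

lemma RG_zpow_mem (n : ℤ) : (α ^ 2) ^ n ∈ RG α := by
  simpa using RG_zpow_mul_mem hα (one_mem_RG α) n

/-- Key quotient lemma: a ratio of two elements of `R` lies in `Eset α`. -/
lemma ratio_mem_Eset {x y β : ℝ} (hx : x ∈ RG α) (hy : y ∈ RG α) (hy0 : y ≠ 0)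
    (h : β * y = x) : β ∈ Eset α := by
  obtain ⟨f, M, hf⟩ := hx
  obtain ⟨g, N, hg⟩ := hy
  have hA : (α:ℝ) ^ 2 ≠ 0 := by positivity
  refine ⟨(f * X ^ N).comp (X ^ 2), (g * X ^ M).comp (X ^ 2), ?_, ?_⟩
  · have : Polynomial.aeval α ((g * X ^ M).comp ((X : Polynomial ℤ) ^ 2))
        = Polynomial.aeval (α ^ 2) g * (α ^ 2) ^ M := by
      rw [aeval_comp]; simp
    rw [this, ← hg]
    exact mul_ne_zero (mul_ne_zero hy0 (pow_ne_zero _ hA)) (pow_ne_zero _ hA)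
  · have h1 : Polynomial.aeval α ((g * X ^ M).comp ((X : Polynomial ℤ) ^ 2))
        = Polynomial.aeval (α ^ 2) g * (α ^ 2) ^ M := by rw [aeval_comp]; simp
    have h2 : Polynomial.aeval α ((f * X ^ N).comp ((X : Polynomial ℤ) ^ 2))
        = Polynomial.aeval (α ^ 2) f * (α ^ 2) ^ N := by rw [aeval_comp]; simp
    rw [h1, h2, ← hf, ← hg]
    calc β * (y * (α ^ 2) ^ N * (α ^ 2) ^ M) = (β * y) * ((α ^ 2) ^ N * (α ^ 2) ^ M) := by ring
      _ = x * (α ^ 2) ^ M * (α ^ 2) ^ N := by rw [h]; ring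

include htr

/-- The positive multiplicative units of `R` are exactly the `(α²)^n`. -/
lemma unit_lemma {a : ℝ} (ha : 0 < a) (h1 : a ∈ RG α) (h2 : a⁻¹ ∈ RG α) :
    ∃ n : ℤ, a = (α ^ 2) ^ n := by
  obtain ⟨f, M, hf⟩ := h1
  obtain ⟨g, N, hg⟩ := h2
  have hA : (0:ℝ) < α ^ 2 := by positivity
  have ha0 : a ≠ 0 := ne_of_gt ha
  have key : Polynomial.aeval (α ^ 2) (f * g) = Polynomial.aeval (α ^ 2) ((X : Polynomial ℤ) ^ (M + N)) := by
    have : Polynomial.aeval (α ^ 2) f * Polynomial.aeval (α ^ 2) g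
        = (a * (α ^ 2) ^ M) * (a⁻¹ * (α ^ 2) ^ N) := by rw [hf, hg]
    rw [map_mul, this]
    have : a * (α ^ 2) ^ M * (a⁻¹ * (α ^ 2) ^ N) = (a * a⁻¹) * ((α ^ 2) ^ M * (α ^ 2) ^ N) := by
      ring
    rw [this, mul_inv_cancel₀ ha0, one_mul, ← pow_add]
    simp
  have hfg : f * g = X ^ (M + N) := htr2' htr _ _ key
  have hdvd : f ∣ (X : Polynomial ℤ) ^ (M + N) := ⟨g, hfg.symm⟩
  obtain ⟨i, hi, hassoc⟩ := (dvd_prime_pow Polynomial.prime_X (M + N)).mp hdvd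
  obtain ⟨u, hu⟩ := hassoc
  obtain ⟨r, hr, hru⟩ := Polynomial.isUnit_iff.mp u.isUnit
  have hfpm : f = X ^ i ∨ f = -(X ^ i) := by
    rcases Int.isUnit_iff.mp hr with rfl | rfl
    · left
      have h1 : (u : Polynomial ℤ) = 1 := by rw [← hru]; simp
      rw [h1, mul_one] at hu
      exact hu
    · right
      have h1 : (u : Polynomial ℤ) = -1 := by rw [← hru]; simp
      rw [h1] at hu
      rw [← hu]; ring
  have haval : a * (α ^ 2) ^ M = Polynomial.aeval (α ^ 2) f := hf
  rcases hfpm with rfl | rfl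
  · refine ⟨(i : ℤ) - (M : ℤ), ?_⟩
    have : a * (α ^ 2) ^ M = (α ^ 2) ^ i := by rw [haval]; simp
    have hM : ((α:ℝ) ^ 2) ^ M ≠ 0 := by positivity
    rw [zpow_sub₀ (ne_of_gt hA), zpow_natCast, zpow_natCast, eq_div_iff hM]
    exact this
  · exfalso
    have : a * (α ^ 2) ^ M = -((α ^ 2) ^ i) := by rw [haval]; simp
    nlinarith [pow_pos hA M, pow_pos hA i]

end main

lemma zpow_two_eq (α : ℝ) (n : ℤ) : α ^ (2 * n) = ((α ^ 2 : ℝ)) ^ n := by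
  have key : ∀ m : ℕ, α ^ (2 * (m : ℤ)) = ((α ^ 2 : ℝ)) ^ (m : ℤ) := by
    intro m
    rw [show (2 * (m : ℤ)) = ((2 * m : ℕ) : ℤ) by push_cast; ring, zpow_natCast, zpow_natCast,
      pow_mul]
  rcases le_or_gt 0 n with h | h
  · obtain ⟨m, rfl⟩ := Int.eq_ofNat_of_zero_le h; exact key m
  · obtain ⟨m, rfl⟩ : ∃ m : ℕ, n = -(m : ℤ) := ⟨n.natAbs, by omega⟩
    rw [show 2 * (-(m : ℤ)) = -(2 * (m : ℤ)) by ring, zpow_neg, zpow_neg, key m]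

/-- The subgroup `G = {v | v 0 ∈ R, v 1 - v 0 ∈ βR}`. -/
def Gsub (α β : ℝ) : AddSubgroup (Fin 2 → ℝ) where
  carrier := {v | v 0 ∈ RG α ∧ ∃ r ∈ RG α, v 1 - v 0 = β * r}
  zero_mem' := ⟨(RG α).zero_mem, 0, (RG α).zero_mem, by simp⟩
  add_mem' := by
    rintro v w ⟨hv0, r, hr, hvr⟩ ⟨hw0, s, hs, hws⟩
    refine ⟨(RG α).add_mem hv0 hw0, r + s, (RG α).add_mem hr hs, ?_⟩
    have : (v + w) 1 - (v + w) 0 = (v 1 - v 0) + (w 1 - w 0) := by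
      simp [Pi.add_apply]; ring
    rw [this, hvr, hws]; ring
  neg_mem' := by
    rintro v ⟨hv0, r, hr, hvr⟩
    refine ⟨(RG α).neg_mem hv0, -r, (RG α).neg_mem hr, ?_⟩
    have : (-v) 1 - (-v) 0 = -(v 1 - v 0) := by simp [Pi.neg_apply]; ring
    rw [this, hvr]; ring

lemma mem_Gsub {α β : ℝ} {v : Fin 2 → ℝ} :
    v ∈ Gsub α β ↔ v 0 ∈ RG α ∧ ∃ r ∈ RG α, v 1 - v 0 = β * r := Iff.rfl

lemma one_one_mem_Gsub (α β : ℝ) : (![1, 1] : Fin 2 → ℝ) ∈ Gsub α β :=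
  ⟨one_mem_RG α, 0, (RG α).zero_mem, by simp⟩

lemma zero_beta_mem_Gsub (α β : ℝ) : (![0, β] : Fin 2 → ℝ) ∈ Gsub α β :=
  ⟨(RG α).zero_mem, 1, one_mem_RG α, by simp⟩

lemma dense_RG {α : ℝ} (hα : 0 < α) (htr : Transcendental ℚ α) :
    Dense ((RG α : AddSubgroup ℝ) : Set ℝ) := by
  rcases AddSubgroup.dense_or_cyclic (RG α) with h | ⟨a, ha⟩
  · exact h
  · exfalso
    have h1 : (1 : ℝ) ∈ AddSubgroup.closure ({a} : Set ℝ) := ha ▸ one_mem_RG α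
    have h2 : (α ^ 2) ∈ AddSubgroup.closure ({a} : Set ℝ) := ha ▸ sq_mem_RG α
    rw [AddSubgroup.mem_closure_singleton] at h1 h2
    obtain ⟨m, hm⟩ := h1
    obtain ⟨k, hk⟩ := h2
    have e1 : (m : ℝ) * a = 1 := by rw [← zsmul_eq_mul]; exact hm
    have e2 : (k : ℝ) * a = α ^ 2 := by rw [← zsmul_eq_mul]; exact hk
    have hm0 : (m : ℝ) ≠ 0 := by
      intro h; rw [h, zero_mul] at e1; exact one_ne_zero e1.symm
    have hmk : α ^ 2 * (m : ℝ) = (k : ℝ) := by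
      calc α ^ 2 * (m : ℝ) = ((k : ℝ) * a) * m := by rw [e2]
        _ = (k : ℝ) * ((m : ℝ) * a) := by ring
        _ = k := by rw [e1, mul_one]
    have hf : Polynomial.aeval (α ^ 2) (C (m : ℤ) * X - C (k : ℤ)) = 0 := by
      simp only [map_sub, map_mul, aeval_C, aeval_X, map_intCast, algebraMap_int_eq, eq_intCast]
      linarith [hmk]
    have hzero := htr2 htr _ hf
    have : (m : ℤ) = 0 := by
      have h3 := congrArg (fun p => Polynomial.coeff p 1) hzero
      simp only [Polynomial.coeff_sub, Polynomial.coeff_C_mul, Polynomial.coeff_X_one,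
        Polynomial.coeff_C, Polynomial.coeff_zero] at h3
      simpa using h3
    exact hm0 (by exact_mod_cast this)

lemma dense_Gsub {α β : ℝ} (hα : 0 < α) (htr : Transcendental ℚ α) (hβ : β ≠ 0) :
    Dense ((Gsub α β : AddSubgroup (Fin 2 → ℝ)) : Set (Fin 2 → ℝ)) := by
  rw [Metric.dense_iff]
  intro v ε hε
  have hd := dense_RG hα htr
  rw [Metric.dense_iff] at hd
  obtain ⟨x, hxball, hxR⟩ := hd (v 0) ε hε
  have hβa : (0 : ℝ) < |β| := abs_pos.mpr hβ
  obtain ⟨r, hrball, hrR⟩ := hd ((v 1 - x) / β) (ε / |β|) (by positivity)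
  refine ⟨![x, x + β * r], ?_, ?_, ?_⟩
  · rw [Metric.mem_ball, dist_pi_lt_iff hε]
    intro i
    fin_cases i
    · simpa [Real.dist_eq] using Metric.mem_ball.mp hxball
    · have h1 : dist r ((v 1 - x) / β) < ε / |β| := Metric.mem_ball.mp hrball
      rw [Real.dist_eq] at h1 ⊢
      have : |β * r - (v 1 - x)| < ε := by
        have heq : β * r - (v 1 - x) = β * (r - (v 1 - x) / β) := by field_simp [mul_comm]
        rw [heq, abs_mul]
        calc |β| * |r - (v 1 - x) / β| < |β| * (ε / |β|) := by
              exact mul_lt_mul_of_pos_left h1 hβa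
          _ = ε := by field_simp
      simpa [Matrix.cons_val_one, Matrix.head_cons, abs_sub_comm] using
        (by rw [show x + β * r - v 1 = β * r - (v 1 - x) by ring]; exact this :
          |x + β * r - v 1| < ε)
  · exact hxR
  · exact ⟨r, hrR, by simp⟩

lemma vecMul_diag (v : Fin 2 → ℝ) (a b : ℝ) :
    Matrix.vecMul v (Matrix.of ![![a, 0], ![0, b]]) = ![v 0 * a, v 1 * b] := by
  funext j
  fin_cases j <;>
    simp [Matrix.vecMul, dotProduct, Fin.sum_univ_two]

lemma vecMul_anti (v : Fin 2 → ℝ) (a b : ℝ) :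
    Matrix.vecMul v (Matrix.of ![![0, a], ![b, 0]]) = ![v 1 * b, v 0 * a] := by
  funext j
  fin_cases j <;>
    simp [Matrix.vecMul, dotProduct, Fin.sum_univ_two]

/-- For an additive subgroup `G` of `ℝ²` (elements viewed as row vectors), `IG G` is the
set of invertible real `2 × 2` matrices `B` of the form `[[a,0],[0,b]]` or `[[0,a],[b,0]]`
with `a > 0`, `b > 0`, such that right multiplication by `B` maps `G` onto `G`. -/
def IG (G : AddSubgroup (Fin 2 → ℝ)) : Set (Matrix (Fin 2) (Fin 2) ℝ) :=
  {B | IsUnit B ∧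
    (∃ a b : ℝ, 0 < a ∧ 0 < b ∧
      (B = Matrix.of ![![a, 0], ![0, b]] ∨ B = Matrix.of ![![0, a], ![b, 0]])) ∧
    (fun v => Matrix.vecMul v B) '' (G : Set (Fin 2 → ℝ)) = (G : Set (Fin 2 → ℝ))}

theorem stmt4 (α : ℝ) (hα : 0 < α) (htr : Transcendental ℚ α) :
    ∃ G : AddSubgroup (Fin 2 → ℝ),
      (![1, 1] : Fin 2 → ℝ) ∈ G ∧
      Dense (G : Set (Fin 2 → ℝ)) ∧
      IG G = {B | ∃ n : ℤ, B = Matrix.of ![![α ^ (2 * n), 0], ![0, α ^ (2 * n)]]} := by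
  obtain ⟨β, hβE⟩ := exists_beta α
  have hβ0 : β ≠ 0 := fun h => hβE (h ▸ zero_mem_Eset α)
  have hA : (0:ℝ) < α ^ 2 := by positivity
  have hA0 : (α:ℝ) ^ 2 ≠ 0 := ne_of_gt hA
  have hA1 : (α:ℝ) ^ 2 ≠ 1 := by
    intro h
    have hf : Polynomial.aeval (α ^ 2) ((X : Polynomial ℤ) - 1) = 0 := by
      simp [h]
    have := htr2 htr _ hf
    have h3 := congrArg (fun p => Polynomial.coeff p 1) this
    simp [Polynomial.coeff_one] at h3
  refine ⟨Gsub α β, one_one_mem_Gsub α β, dense_Gsub hα htr hβ0, ?_⟩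
  ext B
  constructor
  · rintro ⟨hu, ⟨a, b, ha, hb, hform⟩, himg⟩
    have hsub : ∀ v ∈ Gsub α β, Matrix.vecMul v B ∈ Gsub α β := by
      intro v hv
      have : Matrix.vecMul v B ∈ (fun v => Matrix.vecMul v B) '' (Gsub α β : Set (Fin 2 → ℝ)) :=
        ⟨v, hv, rfl⟩
      rw [himg] at this
      exact this
    have hsurj : ∀ w ∈ Gsub α β, ∃ v ∈ Gsub α β, Matrix.vecMul v B = w := by
      intro w hw
      have hw' : w ∈ (Gsub α β : Set (Fin 2 → ℝ)) := hw
      rw [← himg] at hw'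
      obtain ⟨v, hv, hveq⟩ := hw'
      exact ⟨v, hv, hveq⟩
    rcases hform with hdiag | hanti
    · -- diagonal case
      subst hdiag
      -- a ∈ R and b - a ∈ βR
      have h11 := hsub ![1, 1] (one_one_mem_Gsub α β)
      rw [vecMul_diag] at h11
      obtain ⟨haR, r₀, hr₀R, hba⟩ := h11
      simp only [Matrix.cons_val_zero, Matrix.cons_val_one, Matrix.head_cons, one_mul] at haR hba
      -- b ∈ R
      have h0b := hsub ![0, β] (zero_beta_mem_Gsub α β)
      rw [vecMul_diag] at h0b
      obtain ⟨-, r₁, hr₁R, hbr₁⟩ := h0b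
      simp only [Matrix.cons_val_zero, Matrix.cons_val_one, Matrix.head_cons, zero_mul,
        sub_zero] at hbr₁
      have hbR : b ∈ RG α := by
        have : b = r₁ := by
          have := hbr₁
          rw [mul_comm β b] at this
          exact mul_right_cancel₀ hβ0 (by linarith [this])
        exact this ▸ hr₁R
      -- a⁻¹ ∈ R
      obtain ⟨v, hv, hveq⟩ := hsurj ![1, 1] (one_one_mem_Gsub α β)
      rw [vecMul_diag] at hveq
      have hva : v 0 * a = 1 := by
        have := congrFun hveq 0
        simpa using this
      have haiR : a⁻¹ ∈ RG α := by
        have : v 0 = a⁻¹ := eq_inv_of_mul_eq_one_left hva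
        exact this ▸ hv.1
      -- b⁻¹ ∈ R
      obtain ⟨w, hw, hweq⟩ := hsurj ![0, β] (zero_beta_mem_Gsub α β)
      rw [vecMul_diag] at hweq
      have hw0 : w 0 * a = 0 := by simpa using congrFun hweq 0
      have hw1 : w 1 * b = β := by simpa using congrFun hweq 1
      have hw0z : w 0 = 0 := by
        rcases mul_eq_zero.mp hw0 with h | h
        · exact h
        · exact absurd h (ne_of_gt ha)
      obtain ⟨-, s, hsR, hws⟩ := hw
      rw [hw0z, sub_zero] at hws
      have hbiR : b⁻¹ ∈ RG α := by
        have hsb : s * b = 1 := by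
          have : β * s * b = β := by rw [← hws]; exact hw1
          have h2 : β * (s * b) = β * 1 := by rw [mul_one]; rw [← mul_assoc]; exact this
          exact mul_left_cancel₀ hβ0 h2
        have : s = b⁻¹ := eq_inv_of_mul_eq_one_left hsb
        exact this ▸ hsR
      obtain ⟨m, ham⟩ := unit_lemma hα htr ha haR haiR
      obtain ⟨n, hbn⟩ := unit_lemma hα htr hb hbR hbiR
      have hmn : m = n := by
        by_contra hne
        have hba0 : b - a ≠ 0 := by
          rw [ham, hbn]
          intro h
          exact hne (zpow_right_injective₀ hA hA1 (sub_eq_zero.mp h)).symm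
        have hr₀0 : r₀ ≠ 0 := by
          intro h
          rw [h, mul_zero] at hba
          exact hba0 hba
        have hbaR : b - a ∈ RG α := by
          rw [ham, hbn]
          exact (RG α).sub_mem (RG_zpow_mem hα n) (RG_zpow_mem hα m)
        exact hβE (ratio_mem_Eset hα hbaR hr₀R hr₀0 hba.symm)
      subst hmn
      refine ⟨m, ?_⟩
      rw [ham, hbn, zpow_two_eq]
    · -- antidiagonal case: impossible
      exfalso
      subst hanti
      have h11 := hsub ![1, 1] (one_one_mem_Gsub α β)
      rw [vecMul_anti] at h11
      obtain ⟨hbR, -⟩ := h11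
      simp only [Matrix.cons_val_zero, Matrix.cons_val_one, Matrix.head_cons, one_mul] at hbR
      have h0b := hsub ![0, β] (zero_beta_mem_Gsub α β)
      rw [vecMul_anti] at h0b
      obtain ⟨hβbR, -⟩ := h0b
      simp only [Matrix.cons_val_zero, Matrix.cons_val_one, Matrix.head_cons] at hβbR
      exact hβE (ratio_mem_Eset hα hβbR hbR (ne_of_gt hb) rfl)
  · rintro ⟨n, rfl⟩
    have hc : α ^ (2 * n) = ((α ^ 2 : ℝ)) ^ n := zpow_two_eq α n
    have hcpos : (0:ℝ) < α ^ (2 * n) := by rw [hc]; exact zpow_pos hA n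
    have hc0 : α ^ (2 * n) ≠ 0 := ne_of_gt hcpos
    refine ⟨?_, ⟨α ^ (2 * n), α ^ (2 * n), hcpos, hcpos, Or.inl rfl⟩, ?_⟩
    · rw [Matrix.isUnit_iff_isUnit_det, Matrix.det_fin_two_of, isUnit_iff_ne_zero]
      intro h
      have : α ^ (2 * n) * α ^ (2 * n) = 0 := by linarith [h]
      exact hc0 (by rcases mul_eq_zero.mp this with h | h <;> exact h)
    · ext w
      constructor
      · rintro ⟨v, hv, rfl⟩
        dsimp only
        rw [vecMul_diag]
        obtain ⟨hv0, r, hrR, hvr⟩ := hv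
        refine ⟨?_, r * α ^ (2 * n), ?_, ?_⟩
        · simp only [Matrix.cons_val_zero]
          rw [mul_comm, hc]
          exact RG_zpow_mul_mem hα hv0 n
        · rw [mul_comm, hc]
          exact RG_zpow_mul_mem hα hrR n
        · simp only [Matrix.cons_val_zero, Matrix.cons_val_one, Matrix.head_cons]
          rw [show v 1 * α ^ (2*n) - v 0 * α ^ (2*n) = (v 1 - v 0) * α ^ (2*n) by ring, hvr]
          ring
      · intro hw
        obtain ⟨hw0, r, hrR, hwr⟩ := hw
        refine ⟨![w 0 * (α ^ (2 * n))⁻¹, w 1 * (α ^ (2 * n))⁻¹], ⟨?_, r * (α ^ (2 * n))⁻¹, ?_, ?_⟩, ?_⟩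
        · simp only [Matrix.cons_val_zero]
          rw [mul_comm, hc, ← zpow_neg]
          exact RG_zpow_mul_mem hα hw0 (-n)
        · rw [mul_comm, hc, ← zpow_neg]
          exact RG_zpow_mul_mem hα hrR (-n)
        · simp only [Matrix.cons_val_zero, Matrix.cons_val_one, Matrix.head_cons]
          rw [show w 1 * (α ^ (2*n))⁻¹ - w 0 * (α ^ (2*n))⁻¹ = (w 1 - w 0) * (α ^ (2*n))⁻¹ by ring,
            hwr]
          ring
        · dsimp only
          rw [vecMul_diag]
          funext j
          fin_cases j <;> simp <;> field_simp
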